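/- With B, k, S_γ, s_γ as above, for a nonreal w₀ and z ≠ w₀: (S* − w₀I)(S_γ − w̄₀I)^{-1}k(v,z) = [(z̄ − w₀)/(z̄ − w̄₀)]·k(v,z) − [(w̄₀ − w₀)/(z̄ − w̄₀)]·(s_γ(z̄)/s_γ(w̄₀))·k(v,w₀), where the expression is viewed as a function of v. -/
import Mathlib


open Complex

set_option maxHeartbeats 1000000

/-- `e^#(z) = conj (e (conj z))`. -/
noncomputable def eSharp (e : ℂ → ℂ) (z : ℂ) : ℂ :=
  (starRingEnd ℂ) (e ((starRingEnd ℂ) z))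

/-- `s_γ(z) = (i/2)(e^{iγ} e(z) - e^{-iγ} e^#(z))`. -/
noncomputable def sfun (e : ℂ → ℂ) (γ : ℝ) (z : ℂ) : ℂ :=
  I / 2 * (Complex.exp (I * γ) * e z - Complex.exp (-(I * (γ : ℂ))) * eSharp e z)

/-- The de Branges reproducing kernel
`k(z,w) = (e^#(z) e(w̄) - e(z) e^#(w̄)) / (2πi (z - w̄))`. -/
noncomputable def kfun (e : ℂ → ℂ) (z w : ℂ) : ℂ :=
  (eSharp e z * e ((starRingEnd ℂ) w) - e z * eSharp e ((starRingEnd ℂ) w)) /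
    (2 * (Real.pi : ℂ) * I * (z - (starRingEnd ℂ) w))

/-- The action of the resolvent `(S_γ - wI)⁻¹` of the canonical selfadjoint extension
`S_γ` of the multiplication operator:
`((S_γ - wI)⁻¹ f)(z) = (f(z) - (s_γ(z)/s_γ(w)) f(w)) / (z - w)`. -/
noncomputable def res (e : ℂ → ℂ) (γ : ℝ) (w : ℂ) (f : ℂ → ℂ) (z : ℂ) : ℂ :=
  (f z - sfun e γ z / sfun e γ w * f w) / (z - w)

set_option maxHeartbeats 1000000 in
lemma stmt14_aux (T J v Z W w₀ A B Cz Cz' Dw Dw' E F : ℂ)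
    (hT : T ≠ 0) (hJ : J ≠ 0) (hvw : v - W ≠ 0) (hzw : Z - W ≠ 0) (hvz : v - Z ≠ 0)
    (hS : E * Dw - F * Dw' ≠ 0) :
    (A * Cz - B * Cz') / (T * (v - Z))
      + (W - w₀) * (((A * Cz - B * Cz') / (T * (v - Z))
          - (J/2*(E*B - F*A)) / (J/2*(E*Dw - F*Dw')) * ((Dw' * Cz - Dw * Cz') / (T * (W - Z)))) / (v - W))
      = (Z - w₀) / (Z - W) * ((A * Cz - B * Cz') / (T * (v - Z)))
        - (W - w₀) / (Z - W) * ((J/2*(E*Cz - F*Cz')) / (J/2*(E*Dw - F*Dw'))) * ((A * Dw - B * Dw') / (T * (v - W))) := by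
  have hJ2 : (J / 2 : ℂ) ≠ 0 := by simpa using hJ
  have hwz : W - Z ≠ 0 := by
    rw [show W - Z = -(Z - W) by ring]
    exact neg_ne_zero.mpr hzw
  rw [mul_div_mul_left _ _ hJ2, mul_div_mul_left _ _ hJ2]
  have d1 : T * (v - Z) ≠ 0 := mul_ne_zero hT hvz
  have d2 : T * (W - Z) ≠ 0 := mul_ne_zero hT hwz
  have d5 : T * (v - W) ≠ 0 := mul_ne_zero hT hvw
  simp only [mul_div_assoc', div_mul_eq_mul_div, div_div]
  rw [div_sub_div _ _ d1 (mul_ne_zero hS d2)]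
  simp only [mul_div_assoc', div_mul_eq_mul_div, div_div]
  rw [div_add_div _ _ d1 (mul_ne_zero (mul_ne_zero d1 (mul_ne_zero hS d2)) hvw),
    div_sub_div _ _ (mul_ne_zero hzw d1) (mul_ne_zero (mul_ne_zero hzw hS) d5),
    div_eq_div_iff (mul_ne_zero d1 (mul_ne_zero (mul_ne_zero d1 (mul_ne_zero hS d2)) hvw))
      (mul_ne_zero (mul_ne_zero hzw d1) (mul_ne_zero (mul_ne_zero hzw hS) d5))]
  ring

/-- For nonreal `w₀` with `s_γ(w̄₀) ≠ 0` and `z ≠ w₀`, the function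
`(S* - w₀I)(S_γ - w̄₀I)⁻¹ k(·,z) = k(·,z) + (w̄₀ - w₀)(S_γ - w̄₀I)⁻¹ k(·,z)` of `v`
equals `((z̄ - w₀)/(z̄ - w̄₀))·k(v,z) - ((w̄₀ - w₀)/(z̄ - w̄₀))·(s_γ(z̄)/s_γ(w̄₀))·k(v,w₀)`. -/
theorem stmt14 (e : ℂ → ℂ) (he : Differentiable ℂ e) (γ : ℝ) (w₀ z : ℂ)
    (hw : w₀.im ≠ 0) (hz : z ≠ w₀) (hs : sfun e γ ((starRingEnd ℂ) w₀) ≠ 0)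
    (v : ℂ) (hv : v ≠ (starRingEnd ℂ) w₀) :
    kfun e v z
      + ((starRingEnd ℂ) w₀ - w₀) * res e γ ((starRingEnd ℂ) w₀) (fun u => kfun e u z) v
      = ((starRingEnd ℂ) z - w₀) / ((starRingEnd ℂ) z - (starRingEnd ℂ) w₀) * kfun e v z
        - ((starRingEnd ℂ) w₀ - w₀) / ((starRingEnd ℂ) z - (starRingEnd ℂ) w₀)
          * (sfun e γ ((starRingEnd ℂ) z) / sfun e γ ((starRingEnd ℂ) w₀)) * kfun e v w₀ := by
  have hpi : (Real.pi : ℂ) ≠ 0 := by exact_mod_cast Real.pi_ne_zero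
  have hI : (I : ℂ) ≠ 0 := I_ne_zero
  have hT : (2 : ℂ) * (Real.pi : ℂ) * I ≠ 0 :=
    mul_ne_zero (mul_ne_zero two_ne_zero hpi) hI
  have hvw : v - (starRingEnd ℂ) w₀ ≠ 0 := sub_ne_zero.mpr hv
  have hzw : (starRingEnd ℂ) z - (starRingEnd ℂ) w₀ ≠ 0 := by
    rw [sub_ne_zero]
    exact fun h => hz ((starRingEnd ℂ).injective h)
  simp only [kfun, sfun, eSharp, res, Complex.conj_conj] at hs ⊢
  have hS : Complex.exp (I * γ) * e ((starRingEnd ℂ) w₀)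
      - Complex.exp (-(I * (γ:ℂ))) * (starRingEnd ℂ) (e w₀) ≠ 0 := by
    intro h
    apply hs
    rw [h, mul_zero]
  by_cases hvz : v = (starRingEnd ℂ) z
  · subst hvz
    simp only [Complex.conj_conj, sub_self, mul_zero, div_zero, zero_sub, zero_div,
      zero_add] at hvw hzw ⊢
    revert hvw hzw hS hT hI
    generalize e ((starRingEnd ℂ) z) = Cz
    generalize (starRingEnd ℂ) (e z) = Cz'
    generalize e ((starRingEnd ℂ) w₀) = Dw
    generalize (starRingEnd ℂ) (e w₀) = Dw'
    generalize Complex.exp (I * γ) = E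
    generalize Complex.exp (-(I * (γ:ℂ))) = F
    generalize (starRingEnd ℂ) z = Z
    generalize (starRingEnd ℂ) w₀ = W
    generalize (2 : ℂ) * (Real.pi : ℂ) * I = T
    generalize (I : ℂ) = J
    intro hI hT hS hzw hvw
    rw [show W - Z = -(Z - W) by ring]
    simp only [mul_neg, div_neg]
    field_simp
    ring
  · have hvz' : v - (starRingEnd ℂ) z ≠ 0 := sub_ne_zero.mpr hvz
    exact stmt14_aux (2 * (Real.pi : ℂ) * I) I v ((starRingEnd ℂ) z) ((starRingEnd ℂ) w₀) w₀
      ((starRingEnd ℂ) (e ((starRingEnd ℂ) v))) (e v) (e ((starRingEnd ℂ) z)) ((starRingEnd ℂ) (e z))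
      (e ((starRingEnd ℂ) w₀)) ((starRingEnd ℂ) (e w₀)) (Complex.exp (I * γ)) (Complex.exp (-(I * (γ:ℂ))))
      hT hI hvw hzw hvz' hS
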